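/- arXiv:2509.10183 — 5 statements merged into one kernel-verified Lean document; each statement's English description precedes it below -/
import Mathlib

section
/- Let q be a prime power, n a positive integer, and let z₁, z₂ ∈ (F_q)^n with z₁ ≠ 0. Then the number of symmetric n×n matrices H over F_q satisfying H·z₁ = z₂ equals q^(n(n+1)/2) / q^n; equivalently, if H is chosen uniformly at random among symmetric matrices in F_q^{n×n}, then Pr[H·z₁ = z₂] = q^{-n}. -/
/-- Existence of a symmetric solution `H` to `H.mulVec z₁ = z₂` when `z₁ ≠ 0`. -/
lemma aux_exists_symm {n : ℕ} {F : Type} [Field F] (z₁ z₂ : Fin n → F) (hz₁ : z₁ ≠ 0) :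
    ∃ H : Matrix (Fin n) (Fin n) F, H.IsSymm ∧ H.mulVec z₁ = z₂ := by
  obtain ⟨i, hi⟩ : ∃ i, z₁ i ≠ 0 := by
    by_contra h; push_neg at h; exact hz₁ (funext h)
  set v : Fin n → F := fun b => (z₁ i)⁻¹ * (if b = i then 1 else 0) with hv
  have hvz : ∑ b, v b * z₁ b = 1 := by
    have : ∀ b, v b * z₁ b = if b = i then (z₁ i)⁻¹ * z₁ i else 0 := by
      intro b; by_cases hb : b = i <;> simp [hv, hb]
    rw [Finset.sum_congr rfl fun b _ => this b, Finset.sum_ite_eq' Finset.univ i]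
    simp [inv_mul_cancel₀ hi]
  set d : F := ∑ b, z₂ b * z₁ b with hd
  refine ⟨Matrix.of fun a b => z₂ a * v b + v a * z₂ b - d * (v a * v b), ?_, ?_⟩
  · ext a b
    simp [Matrix.transpose_apply]
    ring
  · ext a
    simp only [Matrix.mulVec, dotProduct, Matrix.of_apply]
    have : ∀ b, (z₂ a * v b + v a * z₂ b - d * (v a * v b)) * z₁ b
        = z₂ a * (v b * z₁ b) + v a * (z₂ b * z₁ b) - (d * v a) * (v b * z₁ b) := by
      intro b; ring
    rw [Finset.sum_congr rfl fun b _ => this b, Finset.sum_sub_distrib, Finset.sum_add_distrib,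
      ← Finset.mul_sum, ← Finset.mul_sum, ← Finset.mul_sum, hvz, ← hd]
    ring

/-- Symmetric matrices are equivalent to functions on pairs `(a, b)` with `a ≤ b`. -/
def auxSymmEquiv (n : ℕ) (F : Type) [Field F] :
    {H : Matrix (Fin n) (Fin n) F // H.IsSymm} ≃ ({p : Fin n × Fin n // p.1 ≤ p.2} → F) where
  toFun H p := H.1 p.1.1 p.1.2
  invFun f := ⟨Matrix.of fun a b =>
      if h : a ≤ b then f ⟨(a, b), h⟩ else f ⟨(b, a), le_of_not_ge h⟩, by
    ext a b
    simp only [Matrix.transpose_apply, Matrix.of_apply]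
    rcases le_or_gt a b with h | h
    · rcases lt_or_eq_of_le h with h' | h'
      · rw [dif_neg (not_le_of_gt h'), dif_pos h]
      · subst h'; rfl
    · rw [dif_pos h.le, dif_neg (not_le_of_gt h)]⟩
  left_inv H := by
    ext a b
    simp only [Matrix.of_apply]
    split_ifs with h
    · rfl
    · exact H.2.apply a b
  right_inv f := by
    ext p
    simp only [Matrix.of_apply]
    rw [dif_pos p.2]

def auxIdxEquiv (n : ℕ) : {p : Fin n × Fin n // p.1 ≤ p.2} ≃ (Σ j : Fin n, Fin (j + 1)) where
  toFun p := ⟨p.1.2, ⟨p.1.1, by omega⟩⟩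
  invFun x := ⟨(⟨x.2, by omega⟩, x.1), by have := x.2.2; simp [Fin.le_def]; omega⟩
  left_inv p := by
    obtain ⟨⟨a, b⟩, h⟩ := p
    simp
  right_inv x := by
    obtain ⟨j, k⟩ := x
    simp

lemma aux_card_idx (n : ℕ) : Nat.card {p : Fin n × Fin n // p.1 ≤ p.2} = n * (n + 1) / 2 := by
  rw [Nat.card_congr (auxIdxEquiv n), Nat.card_eq_fintype_card, Fintype.card_sigma]
  simp only [Fintype.card_fin]
  rw [Fin.sum_univ_eq_sum_range (fun j => j + 1) n]
  have h1 : ∑ j ∈ Finset.range (n + 1), j = (∑ j ∈ Finset.range n, (j + 1)) + 0 :=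
    Finset.sum_range_succ' (fun j => j) n
  have h2 := Finset.sum_range_id_mul_two (n + 1)
  rw [h1, add_zero, Nat.add_sub_cancel, Nat.mul_comm (n + 1) n] at h2
  generalize hm : n * (n + 1) = m at h2 ⊢
  omega

/-- For `z₁ ≠ 0`, the number of symmetric `n × n` matrices `H` over the field with `q`
elements satisfying `H ⬝ z₁ = z₂` equals `q ^ (n*(n+1)/2) / q ^ n`. -/
theorem stmt0 (q n : ℕ) (hn : 0 < n) (F : Type) [Field F] [Fintype F]
    (hq : Fintype.card F = q) (hq' : IsPrimePow q)
    (z₁ z₂ : Fin n → F) (hz₁ : z₁ ≠ 0) :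
    Nat.card {H : Matrix (Fin n) (Fin n) F // H.IsSymm ∧ H.mulVec z₁ = z₂} =
      q ^ (n * (n + 1) / 2) / q ^ n := by
  classical
  -- All fibers have the same cardinality as the fiber over 0.
  have fib_eq : ∀ w : Fin n → F,
      Nat.card {H : Matrix (Fin n) (Fin n) F // H.IsSymm ∧ H.mulVec z₁ = w} =
      Nat.card {H : Matrix (Fin n) (Fin n) F // H.IsSymm ∧ H.mulVec z₁ = 0} := by
    intro w
    obtain ⟨H₀, hH₀s, hH₀v⟩ := aux_exists_symm z₁ w hz₁
    refine Nat.card_congr ⟨fun H => ⟨H.1 - H₀, H.2.1.sub hH₀s, by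
        rw [Matrix.sub_mulVec, H.2.2, hH₀v, sub_self]⟩,
      fun H => ⟨H.1 + H₀, H.2.1.add hH₀s, by
        rw [Matrix.add_mulVec, H.2.2, hH₀v, zero_add]⟩, ?_, ?_⟩
    · intro H; ext : 2; simp
    · intro H; ext : 2; simp
  -- Total count of symmetric matrices.
  have card_symm : Nat.card {H : Matrix (Fin n) (Fin n) F // H.IsSymm}
      = q ^ (n * (n + 1) / 2) := by
    rw [Nat.card_congr (auxSymmEquiv n F), Nat.card_fun, ← aux_card_idx n,
      Nat.card_eq_fintype_card, hq]
  -- Decompose symmetric matrices by the value of `H.mulVec z₁`.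
  have decomp : Nat.card {H : Matrix (Fin n) (Fin n) F // H.IsSymm}
      = q ^ n * Nat.card {H : Matrix (Fin n) (Fin n) F // H.IsSymm ∧ H.mulVec z₁ = 0} := by
    rw [← Nat.card_congr (Equiv.sigmaFiberEquiv
        (fun H : {H : Matrix (Fin n) (Fin n) F // H.IsSymm} => H.1.mulVec z₁)),
      Nat.card_eq_fintype_card, Fintype.card_sigma]
    have : ∀ w : Fin n → F,
        Fintype.card {H : {H : Matrix (Fin n) (Fin n) F // H.IsSymm} // H.1.mulVec z₁ = w}
        = Nat.card {H : Matrix (Fin n) (Fin n) F // H.IsSymm ∧ H.mulVec z₁ = 0} := by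
      intro w
      rw [← Nat.card_eq_fintype_card, ← fib_eq w]
      exact Nat.card_congr ⟨fun H => ⟨H.1.1, H.1.2, H.2⟩, fun H => ⟨⟨H.1, H.2.1⟩, H.2.2⟩,
        fun H => rfl, fun H => rfl⟩
    rw [Finset.sum_congr rfl fun w _ => this w, Finset.sum_const, Finset.card_univ,
      Fintype.card_fun, Fintype.card_fin, hq, smul_eq_mul]
  rw [fib_eq z₂]
  have hqpos : 0 < q := hq'.pos
  refine (Nat.div_eq_of_eq_mul_left (by positivity) ?_).symm
  rw [← card_symm, decomp, mul_comm]
end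

section
/- Let n be a positive integer, q a prime, and r a positive real with r√q < q/2. If H is chosen uniformly at random from the symmetric matrices in (ℤ/qℤ)^{n×n}, then the probability that the lattice L^⊥(H) = {(z₁,z₂) ∈ ℤ^{2n} : H·z₁ ≡ z₂ mod q} contains a nonzero vector of Euclidean length less than r√q is at most σ_{2n}·(r + √(n/(2q)))^{2n}, where σ_{2n} is the volume of the 2n-dimensional unit ball. -/
namespace Stmt10Aux

open MeasureTheory Metric ENNReal


variable (d : ℕ)

def cube (w : Fin d → ℤ) : Set (EuclideanSpace ℝ (Fin d)) :=
  {x | ∀ j, x j ∈ Set.Ico ((w j : ℝ) - 1/2) ((w j : ℝ) + 1/2)}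

lemma cube_eq_preimage (w : Fin d → ℤ) :
    cube d w = (MeasurableEquiv.toLp 2 (Fin d → ℝ)).symm ⁻¹'
      (Set.univ.pi fun j => Set.Ico ((w j : ℝ) - 1/2) ((w j : ℝ) + 1/2)) := by
  ext x; simp [cube, Set.mem_pi]

lemma volume_cube (w : Fin d → ℤ) : volume (cube d w) = 1 := by
  rw [cube_eq_preimage,
    (EuclideanSpace.volume_preserving_symm_measurableEquiv_toLp (Fin d)).measure_preimage
      (MeasurableSet.univ_pi fun j => measurableSet_Ico).nullMeasurableSet,
    volume_pi_pi]
  simp [Real.volume_Ico]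
  norm_num

lemma measurable_cube (w : Fin d → ℤ) : MeasurableSet (cube d w) := by
  rw [cube_eq_preimage]
  exact (MeasurableEquiv.toLp 2 (Fin d → ℝ)).symm.measurable
    (MeasurableSet.univ_pi fun j => measurableSet_Ico)

lemma cube_disjoint {w w' : Fin d → ℤ} (h : w ≠ w') : Disjoint (cube d w) (cube d w') := by
  rw [Set.disjoint_left]
  intro x hx hx'
  obtain ⟨j, hj⟩ : ∃ j, w j ≠ w' j := by
    by_contra hc; push_neg at hc; exact h (funext hc)
  have h1 := hx j
  have h2 := hx' j
  simp only [Set.mem_Ico] at h1 h2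
  rcases lt_or_gt_of_ne hj with hlt | hlt
  · have : (w j : ℝ) + 1 ≤ w' j := by exact_mod_cast Int.add_one_le_iff.mpr hlt
    linarith [h1.2, h2.1]
  · have : (w' j : ℝ) + 1 ≤ w j := by exact_mod_cast Int.add_one_le_iff.mpr hlt
    linarith [h2.2, h1.1]

lemma cube_subset {R : ℝ} {w : Fin d → ℤ} (hw : Real.sqrt (∑ j, (w j : ℝ)^2) < R)
    {x : EuclideanSpace ℝ (Fin d)} (hx : x ∈ cube d w) :
    x ∈ closedBall (0 : EuclideanSpace ℝ (Fin d)) (R + Real.sqrt d / 2) := by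
  rw [mem_closedBall, dist_zero_right]
  set ι : EuclideanSpace ℝ (Fin d) := WithLp.toLp 2 (fun j => (w j : ℝ)) with hι
  have hdist : dist x ι ≤ Real.sqrt d / 2 := by
    rw [EuclideanSpace.dist_eq]
    have hb : ∑ j, dist (x j) (ι j) ^ 2 ≤ (d : ℝ) * (1/2)^2 := by
      calc ∑ j, dist (x j) (ι j) ^ 2 ≤ ∑ _j : Fin d, ((1:ℝ)/2)^2 := by
            refine Finset.sum_le_sum fun j _ => ?_
            have h1 := (hx j).1
            have h2 := (hx j).2
            have habs : |x j - (w j : ℝ)| ≤ 1/2 := by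
              rw [abs_le]; constructor <;> [linarith; linarith]
            have : dist (x j) (ι j) = |x j - (w j : ℝ)| := Real.dist_eq _ _
            rw [this]
            exact pow_le_pow_left₀ (abs_nonneg _) habs 2
        _ = (d : ℝ) * (1/2)^2 := by simp [Finset.sum_const]
    calc Real.sqrt (∑ j, dist (x j) (ι j) ^ 2) ≤ Real.sqrt ((d:ℝ) * (1/2)^2) :=
          Real.sqrt_le_sqrt hb
      _ = Real.sqrt d / 2 := by
          rw [Real.sqrt_mul (by positivity), Real.sqrt_sq (by norm_num)]
          ring
  have hnorm : ‖ι‖ < R := by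
    rw [EuclideanSpace.norm_eq]
    simpa [hι] using hw
  calc ‖x‖ = ‖ι + (x - ι)‖ := by rw [add_sub_cancel]
    _ ≤ ‖ι‖ + ‖x - ι‖ := norm_add_le _ _
    _ = ‖ι‖ + dist x ι := by rw [dist_eq_norm]
    _ ≤ R + Real.sqrt d / 2 := by linarith

lemma finite_S (R : ℝ) : {w : Fin d → ℤ | Real.sqrt (∑ j, (w j : ℝ)^2) < R}.Finite := by
  apply Set.Finite.subset (Set.finite_Icc (fun _ : Fin d => (-⌈R⌉)) fun _ => ⌈R⌉)
  intro w hw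
  simp only [Set.mem_setOf_eq] at hw
  have hceil := Int.le_ceil R
  simp only [Set.mem_Icc, Pi.le_def]
  constructor <;> intro j <;> {
    have h1 : ((w j : ℝ))^2 ≤ ∑ i, (w i : ℝ)^2 :=
      Finset.single_le_sum (f := fun i => ((w i : ℝ))^2) (fun i _ => sq_nonneg _)
        (Finset.mem_univ j)
    have h2 : |(w j : ℝ)| ≤ R := by
      rw [← Real.sqrt_sq_eq_abs]
      exact (Real.sqrt_le_sqrt h1).trans hw.le
    rw [abs_le] at h2
    first
    | exact_mod_cast (show (-⌈R⌉ : ℝ) ≤ (w j : ℝ) by linarith [h2.1])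
    | exact_mod_cast (show ((w j : ℝ)) ≤ (⌈R⌉ : ℝ) by linarith [h2.2])
  }

lemma count_le (R : ℝ) (hR : 0 ≤ R) :
    (({w : Fin d → ℤ | Real.sqrt (∑ j, (w j : ℝ)^2) < R}.ncard : ℝ)) ≤
      (volume (closedBall (0 : EuclideanSpace ℝ (Fin d)) 1)).toReal *
        (R + Real.sqrt d / 2) ^ d := by
  have hfin := finite_S d R
  set F := hfin.toFinset with hF
  have hρ : (0:ℝ) ≤ R + Real.sqrt d / 2 := by positivity
  have key : (F.card : ℝ≥0∞) ≤
      ENNReal.ofReal ((R + Real.sqrt d / 2) ^ d) *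
        volume (closedBall (0 : EuclideanSpace ℝ (Fin d)) 1) := by
    have h1 : (F.card : ℝ≥0∞) = ∑ w ∈ F, volume (cube d w) := by
      simp [volume_cube]
    have h2 : ∑ w ∈ F, volume (cube d w) = volume (⋃ w ∈ F, cube d w) := by
      rw [measure_biUnion_finset ?_ fun w _ => measurable_cube d w]
      intro w hw w' hw' hne
      exact cube_disjoint d hne
    have h3 : volume (⋃ w ∈ F, cube d w) ≤
        volume (closedBall (0 : EuclideanSpace ℝ (Fin d)) (R + Real.sqrt d / 2)) := by
      apply measure_mono
      intro x hx
      simp only [Set.mem_iUnion] at hx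
      obtain ⟨w, hw, hxw⟩ := hx
      rw [hF, Set.Finite.mem_toFinset] at hw
      exact cube_subset d hw hxw
    rw [h1, h2]
    refine h3.trans ?_
    rw [Measure.addHaar_closedBall' _ _ hρ, finrank_euclideanSpace_fin]
  have hfin2 : volume (closedBall (0 : EuclideanSpace ℝ (Fin d)) 1) ≠ ⊤ :=
    (measure_closedBall_lt_top).ne
  have hreal := ENNReal.toReal_mono (ENNReal.mul_ne_top ENNReal.ofReal_ne_top hfin2) key
  rw [ENNReal.toReal_mul, ENNReal.toReal_ofReal (by positivity), ENNReal.toReal_natCast] at hreal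
  have hcard : ({w : Fin d → ℤ | Real.sqrt (∑ j, (w j : ℝ)^2) < R}.ncard) = F.card :=
    Set.ncard_eq_toFinset_card _ hfin
  rw [hcard, mul_comm]
  exact hreal



variable (n q : ℕ)

def symmSub : AddSubgroup (Matrix (Fin n) (Fin n) (ZMod q)) where
  carrier := {H | H.IsSymm}
  add_mem' := Matrix.IsSymm.add
  zero_mem' := Matrix.isSymm_zero
  neg_mem' := Matrix.IsSymm.neg

variable {n q}

lemma exists_symm_mulVec [Fact q.Prime] {z : Fin n → ZMod q} (hz : z ≠ 0)
    (y : Fin n → ZMod q) :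
    ∃ H : Matrix (Fin n) (Fin n) (ZMod q), H.IsSymm ∧ H.mulVec z = y := by
  obtain ⟨i, hi⟩ : ∃ i, z i ≠ 0 := by
    by_contra h; push_neg at h; exact hz (funext h)
  set a := z i with ha
  set s := ∑ k, y k * z k with hs
  set e : Fin n → ZMod q := fun k => if k = i then 1 else 0 with he
  refine ⟨Matrix.of fun j k =>
    a⁻¹ * y j * e k + a⁻¹ * e j * y k - a⁻¹ * a⁻¹ * s * e j * e k, ?_, ?_⟩
  · ext j k
    simp only [Matrix.transpose_apply, Matrix.of_apply]
    ring
  · have hainv : a⁻¹ * a = 1 := inv_mul_cancel₀ hi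
    funext j
    simp only [Matrix.mulVec, dotProduct, Matrix.of_apply]
    have expand : ∀ k, (a⁻¹ * y j * e k + a⁻¹ * e j * y k - a⁻¹ * a⁻¹ * s * e j * e k) * z k
        = (a⁻¹ * y j) * (e k * z k) + (a⁻¹ * e j) * (y k * z k)
          - (a⁻¹ * a⁻¹ * s * e j) * (e k * z k) := fun k => by ring
    rw [Finset.sum_congr rfl (fun k _ => expand k), Finset.sum_sub_distrib,
      Finset.sum_add_distrib, ← Finset.mul_sum, ← Finset.mul_sum, ← Finset.mul_sum]
    have hez : ∑ k, e k * z k = a := by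
      rw [ha, ← Finset.sum_subset (Finset.subset_univ {i})]
      · simp [he]
      · intro k _ hk
        simp only [Finset.mem_singleton] at hk
        simp [he, hk]
    rw [hez, ← hs]
    field_simp
    ring

lemma fiber_card_mul [Fact q.Prime] {z : Fin n → ZMod q} (hz : z ≠ 0) (t : Fin n → ZMod q) :
    Nat.card {H : Matrix (Fin n) (Fin n) (ZMod q) // H.IsSymm ∧ H.mulVec z = t} * q ^ n =
      Nat.card {H : Matrix (Fin n) (Fin n) (ZMod q) // H.IsSymm} := by
  classical
  set G := symmSub n q
  -- the hom
  let φ : G →+ (Fin n → ZMod q) :=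
    { toFun := fun H => H.1.mulVec z
      map_zero' := by simp [Matrix.zero_mulVec]
      map_add' := fun A B => by simp [Matrix.add_mulVec] }
  have hφsurj : Function.Surjective φ := by
    intro y
    obtain ⟨H, hH, hHy⟩ := exists_symm_mulVec hz y
    exact ⟨⟨H, hH⟩, hHy⟩
  -- card of quotient
  have hquot : Nat.card (↥G ⧸ φ.ker) = q ^ n := by
    rw [Nat.card_congr (QuotientAddGroup.quotientKerEquivOfSurjective φ hφsurj).toEquiv]
    simp [Nat.card_eq_fintype_card, ZMod.card]
  -- fiber ≃ ker
  obtain ⟨H₀, hH₀⟩ := hφsurj t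
  have hfib : Nat.card {H : ↥G // φ H = t} = Nat.card φ.ker := by
    apply Nat.card_congr
    refine ⟨fun H => ⟨H.1 - H₀, ?_⟩, fun k => ⟨H₀ + k.1, ?_⟩, ?_, ?_⟩
    · rw [AddMonoidHom.mem_ker, map_sub, H.2, hH₀, sub_self]
    · have hk0 : φ k.1 = 0 := k.2
      rw [map_add, hH₀, hk0, add_zero]
    · intro H; ext : 2; simp
    · intro k; ext : 2; simp
  have hGcard := AddSubgroup.card_eq_card_quotient_mul_card_addSubgroup φ.ker
  -- now translate the subtype of matrices
  have e1 : {H : Matrix (Fin n) (Fin n) (ZMod q) // H.IsSymm ∧ H.mulVec z = t} ≃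
      {H : ↥G // φ H = t} :=
    { toFun := fun H => ⟨⟨H.1, H.2.1⟩, H.2.2⟩
      invFun := fun H => ⟨H.1.1, H.1.2, H.2⟩
      left_inv := fun H => rfl
      right_inv := fun H => rfl }
  have e2 : {H : Matrix (Fin n) (Fin n) (ZMod q) // H.IsSymm} ≃ ↥G := Equiv.refl _
  rw [Nat.card_congr e1, Nat.card_congr e2, hfib, hGcard, hquot, mul_comm]


def pairEquivSum (n : ℕ) : Fin n ⊕ Fin n ≃ Fin (2*n) :=
  finSumFinEquiv.trans (finCongr (two_mul n).symm)

def packPair {n : ℕ} (z : (Fin n → ℤ) × (Fin n → ℤ)) : Fin (2*n) → ℤ :=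
  fun j => Sum.elim z.1 z.2 ((pairEquivSum n).symm j)

lemma packPair_inj {n : ℕ} : Function.Injective (packPair (n := n)) := by
  intro z z' h
  have h' : ∀ s, Sum.elim z.1 z.2 s = Sum.elim z'.1 z'.2 s := by
    intro s
    have := congrFun h ((pairEquivSum n) s)
    simpa [packPair] using this
  have h1 : z.1 = z'.1 := funext fun i => by simpa using h' (Sum.inl i)
  have h2 : z.2 = z'.2 := funext fun i => by simpa using h' (Sum.inr i)
  exact Prod.ext h1 h2

lemma packPair_sum {n : ℕ} (z : (Fin n → ℤ) × (Fin n → ℤ)) :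
    ∑ j : Fin (2*n), ((packPair z j : ℝ))^2 =
      ∑ i, ((z.1 i : ℝ))^2 + ∑ i, ((z.2 i : ℝ))^2 := by
  rw [← Equiv.sum_comp (pairEquivSum n) (fun j => ((packPair z j : ℝ))^2)]
  simp [packPair, Fintype.sum_sum_type]

end Stmt10Aux

open MeasureTheory Metric Stmt10Aux in
/-- For `H` uniform among symmetric matrices over `ℤ/qℤ` (`q` prime) and `r√q < q/2`, the
probability that the lattice `L^⊥(H) = {(z₁,z₂) ∈ ℤ^{2n} : H z₁ ≡ z₂ mod q}` contains a
nonzero vector of length `< r√q` is at most `σ_{2n} (r + √(n/(2q)))^{2n}`. -/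
theorem stmt10 (n q : ℕ) (hn : 0 < n) (hq : q.Prime) (r : ℝ) (hr : 0 < r)
    (hrq : r * Real.sqrt q < q / 2) :
    (Nat.card {H : Matrix (Fin n) (Fin n) (ZMod q) // H.IsSymm ∧
        ∃ z₁ z₂ : Fin n → ℤ, (z₁, z₂) ≠ 0 ∧
          Real.sqrt (∑ i, (z₁ i : ℝ) ^ 2 + ∑ i, (z₂ i : ℝ) ^ 2) < r * Real.sqrt q ∧
          H.mulVec (fun i => (z₁ i : ZMod q)) = fun i => (z₂ i : ZMod q)} : ℝ) /
      (Nat.card {H : Matrix (Fin n) (Fin n) (ZMod q) // H.IsSymm} : ℝ) ≤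
    (MeasureTheory.volume
        (Metric.closedBall (0 : EuclideanSpace ℝ (Fin (2 * n))) 1)).toReal *
      (r + Real.sqrt (n / (2 * q))) ^ (2 * n) := by
  classical
  haveI : Fact q.Prime := ⟨hq⟩
  have hq0 : (0:ℝ) < q := by exact_mod_cast hq.pos
  have hsq : (0:ℝ) < Real.sqrt q := Real.sqrt_pos.mpr hq0
  set R := r * Real.sqrt q with hRdef
  have hR0 : 0 < R := by positivity
  set σ : ℝ := (volume (closedBall (0 : EuclideanSpace ℝ (Fin (2 * n))) 1)).toReal with hσ
  have hσ0 : 0 ≤ σ := ENNReal.toReal_nonneg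
  -- the set of short nonzero integer pairs
  set SP : Set ((Fin n → ℤ) × (Fin n → ℤ)) :=
    {z | z ≠ 0 ∧ Real.sqrt (∑ i, ((z.1 i : ℝ))^2 + ∑ i, ((z.2 i : ℝ))^2) < R} with hSPdef
  have hSVfin := finite_S (2*n) R
  have hSPsub : SP ⊆ packPair ⁻¹' {w : Fin (2*n) → ℤ | Real.sqrt (∑ j, ((w j : ℝ))^2) < R} := by
    intro z hz
    simp only [Set.mem_preimage, Set.mem_setOf_eq, packPair_sum]
    exact hz.2
  have hSPfin : SP.Finite :=
    ((hSVfin.preimage packPair_inj.injOn)).subset hSPsub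
  -- cardinality bound on SP
  have hSPcard : (SP.ncard : ℝ) ≤ σ * (R + Real.sqrt ((2*n : ℕ) : ℝ) / 2) ^ (2*n) := by
    refine le_trans ?_ (count_le (2*n) R hR0.le)
    have himg : packPair '' SP ⊆ {w : Fin (2*n) → ℤ | Real.sqrt (∑ j, ((w j : ℝ))^2) < R} := by
      rintro w ⟨z, hz, rfl⟩
      exact hSPsub hz
    rw [← Set.ncard_image_of_injective SP packPair_inj]
    exact_mod_cast Nat.cast_le.mpr (Set.ncard_le_ncard himg hSVfin)
  -- vanishing mod q forces vanishing
  have hzero : ∀ z : (Fin n → ℤ) × (Fin n → ℤ), z ∈ SP →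
      ((fun i => ((z.1 i : ZMod q))) = 0 → z.1 = 0) ∧
      ((fun i => ((z.2 i : ZMod q))) = 0 → z.2 = 0) := by
    intro z hz
    have hS1 : (0:ℝ) ≤ ∑ i, ((z.1 i : ℝ))^2 := Finset.sum_nonneg fun i _ => sq_nonneg _
    have hS2 : (0:ℝ) ≤ ∑ i, ((z.2 i : ℝ))^2 := Finset.sum_nonneg fun i _ => sq_nonneg _
    have key : ∀ v : Fin n → ℤ,
        (∑ i, ((v i : ℝ))^2 ≤ ∑ i, ((z.1 i : ℝ))^2 + ∑ i, ((z.2 i : ℝ))^2) →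
        (fun i => ((v i : ZMod q))) = 0 → v = 0 := by
      intro v hv h0
      funext i
      have h1 : ((v i : ℝ))^2 ≤ ∑ i, ((v i : ℝ))^2 :=
        Finset.single_le_sum (f := fun i => ((v i : ℝ))^2) (fun i _ => sq_nonneg _)
          (Finset.mem_univ i)
      have h2 : |(v i : ℝ)| < (q : ℝ) := by
        rw [← Real.sqrt_sq_eq_abs]
        calc Real.sqrt (((v i : ℝ))^2)
            ≤ Real.sqrt (∑ i, ((z.1 i : ℝ))^2 + ∑ i, ((z.2 i : ℝ))^2) :=
              Real.sqrt_le_sqrt (h1.trans hv)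
          _ < R := hz.2
          _ < q / 2 := hrq
          _ < q := by linarith
      have hdvd : (q : ℤ) ∣ v i := by
        have := congrFun h0 i
        simpa using (ZMod.intCast_zmod_eq_zero_iff_dvd (v i) q).mp this
      refine Int.eq_zero_of_abs_lt_dvd hdvd ?_
      exact_mod_cast (by push_cast; exact h2 : ((|v i| : ℤ) : ℝ) < ((q:ℤ) : ℝ))
    exact ⟨key z.1 (by linarith), key z.2 (by linarith)⟩
  -- union bound
  set P : Matrix (Fin n) (Fin n) (ZMod q) → Prop := fun H => H.IsSymm ∧
      ∃ z₁ z₂ : Fin n → ℤ, (z₁, z₂) ≠ 0 ∧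
        Real.sqrt (∑ i, (z₁ i : ℝ) ^ 2 + ∑ i, (z₂ i : ℝ) ^ 2) < r * Real.sqrt q ∧
        H.mulVec (fun i => (z₁ i : ZMod q)) = fun i => (z₂ i : ZMod q) with hPdef
  set B : ((Fin n → ℤ) × (Fin n → ℤ)) → Finset (Matrix (Fin n) (Fin n) (ZMod q)) :=
    fun z => Finset.univ.filter (fun H => H.IsSymm ∧
      H.mulVec (fun i => ((z.1 i : ZMod q))) = fun i => ((z.2 i : ZMod q))) with hBdef
  have hsub : Finset.univ.filter P ⊆ hSPfin.toFinset.biUnion B := by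
    intro H hH
    rw [Finset.mem_filter] at hH
    obtain ⟨-, hsymm, z₁, z₂, hne, hlen, heq⟩ := hH
    rw [Finset.mem_biUnion]
    refine ⟨(z₁, z₂), ?_, ?_⟩
    · rw [Set.Finite.mem_toFinset]; exact ⟨hne, hlen⟩
    · rw [hBdef]; rw [Finset.mem_filter]; exact ⟨Finset.mem_univ _, hsymm, heq⟩
  set M := Nat.card {H : Matrix (Fin n) (Fin n) (ZMod q) // H.IsSymm} with hMdef
  have hMpos : 0 < M := by
    have : Nonempty {H : Matrix (Fin n) (Fin n) (ZMod q) // H.IsSymm} :=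
      ⟨⟨0, Matrix.isSymm_zero⟩⟩
    exact Nat.card_pos
  have hBz : ∀ z ∈ hSPfin.toFinset, (B z).card * q ^ n ≤ M := by
    intro z hzF
    rw [Set.Finite.mem_toFinset] at hzF
    by_cases h0 : (fun i => ((z.1 i : ZMod q))) = 0
    · have hBempty : B z = ∅ := by
        rw [Finset.eq_empty_iff_forall_notMem]
        intro H hH
        rw [hBdef, Finset.mem_filter] at hH
        obtain ⟨-, -, heq⟩ := hH
        have h1 : z.1 = 0 := (hzero z hzF).1 h0
        have h2 : z.2 = 0 := by
          refine (hzero z hzF).2 ?_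
          rw [h0] at heq
          rw [← heq, Matrix.mulVec_zero]
        exact hzF.1 (Prod.ext h1 h2)
      simp [hBempty]
    · have hfib := fiber_card_mul h0 (fun i => ((z.2 i : ZMod q)))
      have hc : (B z).card = Nat.card {H : Matrix (Fin n) (Fin n) (ZMod q) //
          H.IsSymm ∧ H.mulVec (fun i => ((z.1 i : ZMod q))) = fun i => ((z.2 i : ZMod q))} := by
        rw [hBdef]
        simp [Nat.card_eq_fintype_card, Fintype.card_subtype]
      rw [hc, hfib]
  -- numerator identification
  have hcardA : Nat.card {H : Matrix (Fin n) (Fin n) (ZMod q) // H.IsSymm ∧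
      ∃ z₁ z₂ : Fin n → ℤ, (z₁, z₂) ≠ 0 ∧
        Real.sqrt (∑ i, (z₁ i : ℝ) ^ 2 + ∑ i, (z₂ i : ℝ) ^ 2) < r * Real.sqrt q ∧
        H.mulVec (fun i => (z₁ i : ZMod q)) = fun i => (z₂ i : ZMod q)} =
      (Finset.univ.filter P).card := by
    rw [Nat.card_eq_fintype_card]
    exact Fintype.card_subtype P
  -- counting chain in ℕ
  have hchain : (Finset.univ.filter P).card * q ^ n ≤ SP.ncard * M := by
    calc (Finset.univ.filter P).card * q ^ n
        ≤ (hSPfin.toFinset.biUnion B).card * q ^ n := by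
          exact Nat.mul_le_mul_right _ (Finset.card_le_card hsub)
      _ ≤ (∑ z ∈ hSPfin.toFinset, (B z).card) * q ^ n := by
          exact Nat.mul_le_mul_right _ (Finset.card_biUnion_le)
      _ = ∑ z ∈ hSPfin.toFinset, ((B z).card * q ^ n) := by rw [Finset.sum_mul]
      _ ≤ ∑ z ∈ hSPfin.toFinset, M := Finset.sum_le_sum hBz
      _ = SP.ncard * M := by
          rw [Finset.sum_const, smul_eq_mul, Set.ncard_eq_toFinset_card _ hSPfin]
  -- algebraic finish
  have hqpow : ((q : ℝ)) ^ n = (Real.sqrt q) ^ (2*n) := by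
    rw [pow_mul, Real.sq_sqrt hq0.le]
  have hc2 : Real.sqrt ((2*n : ℕ) : ℝ) / 2 = Real.sqrt ((n : ℝ) / (2*q)) * Real.sqrt q := by
    rw [← Real.sqrt_mul (by positivity) (q : ℝ)]
    have e1 : (n : ℝ) / (2*q) * q = (n : ℝ) / 2 := by field_simp
    rw [e1]
    have e2 : ((2*n : ℕ) : ℝ) = 4 * ((n:ℝ)/2) := by push_cast; ring
    rw [e2, Real.sqrt_mul (by norm_num) ((n:ℝ)/2), show Real.sqrt 4 = 2 by
      rw [show (4:ℝ) = 2^2 by norm_num, Real.sqrt_sq (by norm_num)]]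
    ring
  have hrho : (R + Real.sqrt ((2*n : ℕ) : ℝ) / 2) ^ (2*n) =
      (r + Real.sqrt ((n : ℝ) / (2*q))) ^ (2*n) * (q : ℝ) ^ n := by
    rw [hc2, hRdef, hqpow, ← mul_pow]
    ring_nf
  -- put it together
  rw [hcardA, div_le_iff₀ (by exact_mod_cast hMpos)]
  have hq_pow_pos : (0:ℝ) < (q : ℝ) ^ n := by positivity
  rw [← mul_le_mul_iff_of_pos_right hq_pow_pos]
  have hcast : ((Finset.univ.filter P).card : ℝ) * (q : ℝ) ^ n ≤ (SP.ncard : ℝ) * M := by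
    exact_mod_cast hchain
  calc ((Finset.univ.filter P).card : ℝ) * (q : ℝ) ^ n
      ≤ (SP.ncard : ℝ) * M := hcast
    _ ≤ (σ * (R + Real.sqrt ((2*n : ℕ) : ℝ) / 2) ^ (2*n)) * M := by
        have := mul_le_mul_of_nonneg_right hSPcard (by positivity : (0:ℝ) ≤ (M:ℝ))
        exact this
    _ = σ * (r + Real.sqrt ((n : ℝ) / (2*q))) ^ (2*n) * M * (q : ℝ) ^ n := by
        rw [hrho]; ring
end

section
/- Let n ≥ 8 be a power of 2 and let q be a prime with q ≡ 5 (mod 8). Then the multiplicative order of q modulo 2n equals n/2; in particular, q is a primitive λ-root modulo 2n (since λ(2n) = n/2 for 2n a power of 2 at least 8), and consequently the polynomial X^n + 1 factors modulo q into exactly two distinct irreducible polynomials, each of degree n/2. -/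
open Polynomial

/-- squaring step -/
lemma sq_step (j x v : ℕ) (h : x = 1 + 2 ^ (j + 2) * v) :
    x ^ 2 = 1 + 2 ^ (j + 3) * (v + 2 ^ (j + 1) * v ^ 2) := by
  subst h; ring

lemma odd_step (j v : ℕ) (hv : Odd v) : Odd (v + 2 ^ (j + 1) * v ^ 2) := by
  obtain ⟨a, ha⟩ := hv
  exact ⟨a + 2 ^ j * v ^ 2, by subst ha; ring⟩

/-- q ≡ 5 mod 8 : q^(2^j) = 1 + 2^(j+2) * odd -/
lemma q5_pow (q : ℕ) (hq : q % 8 = 5) (j : ℕ) :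
    ∃ w, Odd w ∧ q ^ 2 ^ j = 1 + 2 ^ (j + 2) * w := by
  induction j with
  | zero =>
    refine ⟨2 * (q / 8) + 1, ⟨q / 8, by ring⟩, ?_⟩
    have := Nat.div_add_mod q 8
    simp only [pow_zero, pow_one]
    omega
  | succ j ih =>
    obtain ⟨w, hw, hx⟩ := ih
    refine ⟨w + 2 ^ (j + 1) * w ^ 2, odd_step j w hw, ?_⟩
    have : q ^ 2 ^ (j + 1) = (q ^ 2 ^ j) ^ 2 := by
      rw [← pow_mul, pow_succ]
    rw [this, sq_step j _ w hx]

/-- odd x : x^(2^(j+1)) = 1 + 2^(j+3) * w -/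
lemma odd_pow (x : ℕ) (hx : x % 2 = 1) (j : ℕ) :
    ∃ w, x ^ 2 ^ (j + 1) = 1 + 2 ^ (j + 3) * w := by
  induction j with
  | zero =>
    obtain ⟨s, rfl⟩ : ∃ s, x = 2 * s + 1 := ⟨x / 2, by omega⟩
    obtain ⟨w, hw⟩ := (Nat.even_mul_succ_self s).exists_two_nsmul _
    refine ⟨w, ?_⟩
    have : (2 * s + 1) ^ 2 ^ 1 = 1 + 4 * (s * (s + 1)) := by ring
    rw [this, hw]; ring
  | succ j ih =>
    obtain ⟨w, hw⟩ := ih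
    refine ⟨w + 2 ^ (j + 2) * w ^ 2, ?_⟩
    have h2 : x ^ 2 ^ (j + 2) = (x ^ 2 ^ (j + 1)) ^ 2 := by
      rw [← pow_mul, pow_succ]
    rw [h2, sq_step (j + 1) _ w hw]

lemma cast_one_add (N w : ℕ) (h : (x : ℕ) = 1 + N * w) [NeZero N] :
    ((x : ℕ) : ZMod N) = 1 := by
  have h0 : ((N : ℕ) : ZMod N) = 0 := ZMod.natCast_self _
  rw [h]; push_cast; rw [h0]; ring

lemma order_q (k q : ℕ) (hq5 : q % 8 = 5) :
    orderOf ((q : ZMod (2 ^ (k + 4)))) = 2 ^ (k + 2) := by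
  obtain ⟨w1, hw1o, hw1⟩ := q5_pow q hq5 (k + 2)
  obtain ⟨w2, hw2o, hw2⟩ := q5_pow q hq5 (k + 1)
  have h1 : (q : ZMod (2 ^ (k + 4))) ^ 2 ^ (k + 2) = 1 := by
    rw [← Nat.cast_pow]
    exact cast_one_add _ w1 hw1
  have h2 : (q : ZMod (2 ^ (k + 4))) ^ 2 ^ (k + 1) ≠ 1 := by
    intro hcon
    rw [← Nat.cast_pow, hw2] at hcon
    have : ((2 ^ (k + 3) * w2 : ℕ) : ZMod (2 ^ (k + 4))) = 0 := by
      push_cast at hcon ⊢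
      linear_combination hcon
    rw [ZMod.natCast_eq_zero_iff] at this
    have h23 : (2:ℕ) ^ (k + 3) * 2 ∣ 2 ^ (k + 3) * w2 := by
      rw [← pow_succ]; exact this
    have : 2 ∣ w2 := (Nat.mul_dvd_mul_iff_left (Nat.pow_pos (n := k + 3) two_pos)).mp h23
    rw [Nat.odd_iff] at hw2o; omega
  have hd : orderOf ((q : ZMod (2 ^ (k + 4)))) ∣ 2 ^ (k + 2) :=
    orderOf_dvd_of_pow_eq_one h1
  obtain ⟨i, hi, hie⟩ := (Nat.dvd_prime_pow Nat.prime_two).mp hd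
  have : ¬ i ≤ k + 1 := by
    intro hik
    exact h2 (orderOf_dvd_iff_pow_eq_one.mp (hie ▸ pow_dvd_pow 2 hik))
  rw [hie]; congr 1; omega

lemma exponent_units (k q : ℕ) (hq : q.Prime) (hq5 : q % 8 = 5) :
    Monoid.exponent (ZMod (2 ^ (k + 4)))ˣ = 2 ^ (k + 2) := by
  have hqodd : q % 2 = 1 := by omega
  have hcop : Nat.Coprime q (2 ^ (k + 4)) := by
    apply Nat.Coprime.pow_right
    rw [Nat.coprime_comm]
    exact (Nat.Prime.coprime_iff_not_dvd Nat.prime_two).mpr (by omega)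
  apply Nat.dvd_antisymm
  · apply Monoid.exponent_dvd_of_forall_pow_eq_one
    intro g
    have hodd : (g : ZMod (2 ^ (k + 4))).val % 2 = 1 := by
      have hc := ZMod.val_coe_unit_coprime g
      have h2 : (2:ℕ) ∣ 2 ^ (k + 4) := dvd_pow_self 2 (by omega)
      rcases Nat.even_or_odd (g : ZMod (2 ^ (k + 4))).val with he | ho
      · exfalso
        obtain ⟨t, ht⟩ := he
        have : ¬ Nat.Coprime ((g : ZMod (2 ^ (k + 4))).val) (2 ^ (k + 4)) := by
          intro hcc
          have := ((hcc.coprime_dvd_right h2).symm.eq_one_of_dvd ⟨t, by omega⟩)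
          omega
        exact this hc
      · exact Nat.odd_iff.mp ho
    obtain ⟨w, hw⟩ := odd_pow _ hodd (k + 1)
    have hcast : ((g : ZMod (2 ^ (k + 4))) : ZMod (2 ^ (k + 4))) ^ 2 ^ (k + 2) = 1 := by
      have hv : (((g : ZMod (2 ^ (k + 4))).val : ℕ) : ZMod (2 ^ (k + 4))) =
          (g : ZMod (2 ^ (k + 4))) := ZMod.natCast_rightInverse _
      rw [← hv, ← Nat.cast_pow]
      exact cast_one_add _ w hw
    ext
    push_cast
    simpa using hcast
  · have ho := order_q k q hq5
    rw [← ZMod.coe_unitOfCoprime q hcop, orderOf_units] at ho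
    exact ho ▸ Monoid.order_dvd_exponent _

lemma orderOf_two_pow {M : Type*} [Monoid M] (a : M) (j : ℕ)
    (h1 : a ^ 2 ^ (j + 1) = 1) (h2 : a ^ 2 ^ j ≠ 1) : orderOf a = 2 ^ (j + 1) := by
  obtain ⟨i, hi, hie⟩ := (Nat.dvd_prime_pow Nat.prime_two).mp (orderOf_dvd_of_pow_eq_one h1)
  have : ¬ i ≤ j := fun hik =>
    h2 (orderOf_dvd_iff_pow_eq_one.mp (hie ▸ pow_dvd_pow 2 hik))
  rw [hie]; congr 1; omega

lemma irr_factor (k q : ℕ) (hq : q.Prime) (hq5 : q % 8 = 5) (r : ZMod q) (hr : r ^ 2 = -1) :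
    Irreducible (X ^ 2 ^ (k + 2) - C r : Polynomial (ZMod q)) := by
  haveI := Fact.mk hq
  set m := 2 ^ (k + 2) with hm
  have hm0 : m ≠ 0 := by positivity
  set f : Polynomial (ZMod q) := X ^ m - C r with hf
  have hfm : f.Monic := monic_X_pow_sub_C r hm0
  have hfd : f.natDegree = m := natDegree_X_pow_sub_C
  have hf0 : f ≠ 0 := hfm.ne_zero
  have h2q : (2 : ZMod q) ≠ 0 := by
    have : ((2 : ℕ) : ZMod q) ≠ 0 := by
      rw [Ne, ZMod.natCast_eq_zero_iff]
      intro h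
      have := Nat.le_of_dvd two_pos h
      omega
    simpa using this
  obtain ⟨g, hgm, hgi, hgdvd⟩ := f.exists_monic_irreducible_factor
    (not_isUnit_of_natDegree_pos f (by rw [hfd]; positivity))
  haveI := Fact.mk hgi
  set K := AdjoinRoot g with hK
  have hg0 : g ≠ 0 := hgm.ne_zero
  set d := g.natDegree with hd
  have hdle : d ≤ m := hfd ▸ natDegree_le_of_dvd hgdvd hf0
  have hdpos : 0 < d := hgi.natDegree_pos
  -- the root
  set α : K := AdjoinRoot.root g with hα
  have hinj : Function.Injective (algebraMap (ZMod q) K) :=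
    (algebraMap (ZMod q) K).injective
  set R1 : K := algebraMap (ZMod q) K r with hR1
  have hR2 : R1 ^ 2 = -1 := by
    rw [hR1, ← map_pow, hr, map_neg, map_one]
  have hR4 : R1 ^ 4 = 1 := by
    have : R1 ^ 4 = (R1 ^ 2) ^ 2 := by ring
    rw [this, hR2]; ring
  have hneg1 : (-1 : K) ≠ 1 := by
    intro h
    apply h2q
    apply hinj
    rw [map_ofNat, map_zero]
    linear_combination -h
  have hαm : α ^ m = R1 := by
    have h0 : AdjoinRoot.mk g f = 0 := AdjoinRoot.mk_eq_zero.mpr hgdvd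
    rw [hf, map_sub, map_pow, AdjoinRoot.mk_X, AdjoinRoot.mk_C, sub_eq_zero] at h0
    rw [hα, h0, hR1]
    rfl
  have hα0 : α ≠ 0 := by
    intro h
    rw [h, zero_pow hm0] at hαm
    have h0 : (-1 : K) = 0 := by rw [← hR2, ← hαm]; ring
    exact one_ne_zero (by rw [← neg_neg (1 : K), h0, neg_zero])
  have hord : orderOf α = 2 ^ (k + 4) := by
    apply orderOf_two_pow
    · have : α ^ 2 ^ (k + 4) = (α ^ m) ^ 4 := by
        rw [hm, ← pow_mul]; ring_nf
      rw [this, hαm, hR4]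
    · have : α ^ 2 ^ (k + 3) = (α ^ m) ^ 2 := by
        rw [hm, ← pow_mul]; ring_nf
      rw [this, hαm, hR2]
      exact hneg1
  -- finiteness and cardinality
  letI : Fintype K := Module.fintypeOfFintype (AdjoinRoot.powerBasis hg0).basis
  have hcard : Fintype.card K = q ^ d := by
    rw [Module.card_fintype (AdjoinRoot.powerBasis hg0).basis, ZMod.card,
      Fintype.card_fin]
    congr 1
  have hpow : α ^ (q ^ d - 1) = 1 := by
    have := FiniteField.pow_card_sub_one_eq_one α hα0
    rwa [hcard] at this
  have hdvd : 2 ^ (k + 4) ∣ q ^ d - 1 := hord ▸ orderOf_dvd_of_pow_eq_one hpow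
  have hqd : (q : ZMod (2 ^ (k + 4))) ^ d = 1 := by
    have h1 : q ^ d = (q ^ d - 1) + 1 := by
      have : 1 ≤ q ^ d := Nat.one_le_pow _ _ (by omega)
      omega
    calc (q : ZMod (2 ^ (k + 4))) ^ d = ((q ^ d : ℕ) : ZMod (2 ^ (k + 4))) := by push_cast; ring
      _ = ((q ^ d - 1 : ℕ) : ZMod (2 ^ (k + 4))) + 1 := by rw [h1]; push_cast; ring
      _ = 0 + 1 := by rw [(ZMod.natCast_eq_zero_iff _ _).mpr hdvd]
      _ = 1 := by ring
  have hmdvd : m ∣ d := by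
    have := orderOf_dvd_of_pow_eq_one hqd
    rwa [order_q k q hq5] at this
  have hdm : d = m := le_antisymm hdle (Nat.le_of_dvd hdpos hmdvd)
  -- conclude f = g
  obtain ⟨c, hc⟩ := hgdvd
  have hc0 : c ≠ 0 := fun h => hf0 (by rw [hc, h, mul_zero])
  have hcdeg : c.natDegree = 0 := by
    have := natDegree_mul hg0 hc0
    rw [← hc, hfd, ← hdm] at this
    omega
  have hcC : c = C (c.coeff 0) := eq_C_of_natDegree_eq_zero hcdeg
  have hlc : c.coeff 0 = 1 := by
    have h1 : f.leadingCoeff = g.leadingCoeff * c.leadingCoeff := by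
      rw [hc, leadingCoeff_mul]
    rw [hfm.leadingCoeff, hgm.leadingCoeff, one_mul, leadingCoeff, hcdeg] at h1
    exact h1.symm
  have : f = g := by rw [hc, hcC, hlc, map_one, mul_one]
  rw [this]
  exact hgi

/-- For `n ≥ 8` a power of two and `q ≡ 5 (mod 8)` prime, the order of `q` modulo `2n` is
`n/2`; hence `q` is a primitive `λ`-root modulo `2n`, and `X^n + 1` factors modulo `q` into
exactly two distinct monic irreducible polynomials of degree `n/2`. -/
theorem stmt13 (n : ℕ) (hn8 : 8 ≤ n) (hn : ∃ e : ℕ, n = 2 ^ e) (q : ℕ) (hq : q.Prime)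
    (hq5 : q % 8 = 5) :
    orderOf ((q : ZMod (2 * n))) = n / 2 ∧
    orderOf ((q : ZMod (2 * n))) = Monoid.exponent (ZMod (2 * n))ˣ ∧
    ∃ p₁ p₂ : Polynomial (ZMod q), p₁ ≠ p₂ ∧
      p₁.Monic ∧ p₂.Monic ∧ Irreducible p₁ ∧ Irreducible p₂ ∧
      p₁.natDegree = n / 2 ∧ p₂.natDegree = n / 2 ∧
      (X ^ n + 1 : Polynomial (ZMod q)) = p₁ * p₂ := by
  obtain ⟨e, rfl⟩ := hn
  have he : 3 ≤ e :=
    (Nat.pow_le_pow_iff_right (by norm_num : 1 < 2)).mp (show 2 ^ 3 ≤ 2 ^ e from hn8)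
  obtain ⟨k, rfl⟩ : ∃ k, e = k + 3 := ⟨e - 3, by omega⟩
  have h2n : 2 * 2 ^ (k + 3) = 2 ^ (k + 4) := by ring
  have hhalf : 2 ^ (k + 3) / 2 = 2 ^ (k + 2) := by
    rw [pow_succ]
    exact Nat.mul_div_cancel _ two_pos
  rw [h2n, hhalf]
  refine ⟨order_q k q hq5, ?_, ?_⟩
  · rw [order_q k q hq5, exponent_units k q hq hq5]
  · haveI := Fact.mk hq
    have hsq : IsSquare (-1 : ZMod q) := ZMod.exists_sq_eq_neg_one_iff.mpr (by omega)
    obtain ⟨r, hrr⟩ := hsq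
    have hr : r ^ 2 = -1 := by rw [sq]; exact hrr.symm
    have hr0 : r ≠ 0 := by
      intro h
      rw [h] at hr
      simp only [ne_eq, zero_pow, OfNat.ofNat_ne_zero, not_false_eq_true] at hr
      exact one_ne_zero (by rw [← neg_neg (1 : ZMod q), ← hr, neg_zero])
    have h2q : (2 : ZMod q) ≠ 0 := by
      have : ((2 : ℕ) : ZMod q) ≠ 0 := by
        rw [Ne, ZMod.natCast_eq_zero_iff]
        intro h
        have := Nat.le_of_dvd two_pos h
        omega
      simpa using this
    have hrneg : r ≠ -r := by
      intro h
      apply hr0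
      have h2 : 2 * r = 0 := by linear_combination h
      rcases mul_eq_zero.mp h2 with h | h
      · exact absurd h h2q
      · exact h
    have hrn : (-r) ^ 2 = -1 := by rw [← hr]; ring
    have hm0 : (2 : ℕ) ^ (k + 2) ≠ 0 := by positivity
    refine ⟨X ^ 2 ^ (k + 2) - C r, X ^ 2 ^ (k + 2) - C (-r), ?_,
      monic_X_pow_sub_C _ hm0, monic_X_pow_sub_C _ hm0,
      irr_factor k q hq hq5 r hr, irr_factor k q hq hq5 (-r) hrn,
      natDegree_X_pow_sub_C, natDegree_X_pow_sub_C, ?_⟩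
    · intro h
      exact hrneg (C_inj.mp (sub_right_inj.mp h))
    · have hmul : (X ^ 2 ^ (k + 2) - C r) * (X ^ 2 ^ (k + 2) - C (-r)) =
          (X ^ 2 ^ (k + 2)) ^ 2 - C r ^ 2 := by
        rw [map_neg]; ring
      rw [hmul, ← pow_mul, ← C_pow, hr, map_neg, map_one, sub_neg_eq_add]
      congr 2
end

section
/- Let n be a positive integer and let σ_n be the n×n matrix with σ_n = [[1, 0], [0, −Ī_{n−1}]] where Ī_{n−1} is the (n−1)×(n−1) anti-diagonal (reversal) matrix. For any h = (h₀,…,h_{n−1}) with multiplication matrix ρ(h) in ℤ[X]/(X^n+1) (the negacyclic circulant matrix of h), the matrix σ_n·ρ(h) is symmetric. -/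
/-- The negacyclic (multiplication) matrix of `h` in `ℤ[X]/(X^n+1)` with respect to the
basis `1, X, …, X^{n-1}`: row `i` is the coefficient vector of `X^i · h`. -/
def negacirc (n : ℕ) (h : Fin n → ℤ) : Matrix (Fin n) (Fin n) ℤ :=
  Matrix.of fun i j =>
    if hij : (i : ℕ) ≤ (j : ℕ) then h ⟨(j : ℕ) - (i : ℕ), by have := j.isLt; omega⟩
    else -h ⟨n + (j : ℕ) - (i : ℕ), by have := i.isLt; have := j.isLt; omega⟩

/-- The matrix `σ_n = [[1, 0], [0, -Ī_{n-1}]]`, where `Ī_{n-1}` is the anti-diagonal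
reversal matrix. -/
def sigmaMat (n : ℕ) : Matrix (Fin n) (Fin n) ℤ :=
  Matrix.of fun i j =>
    if (i : ℕ) = 0 ∧ (j : ℕ) = 0 then 1
    else if (i : ℕ) + (j : ℕ) = n then -1 else 0

lemma sigma_mul_entry (n : ℕ) (hn : 0 < n) (h : Fin n → ℤ) (i j : Fin n) :
    (sigmaMat n * negacirc n h) i j =
      if hlt : (i : ℕ) + (j : ℕ) < n then h ⟨(i : ℕ) + (j : ℕ), hlt⟩
      else -h ⟨(i : ℕ) + (j : ℕ) - n, by have := i.isLt; have := j.isLt; omega⟩ := by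
  rw [Matrix.mul_apply]
  have hj := j.isLt
  by_cases hi : (i : ℕ) = 0
  · rw [Finset.sum_eq_single (⟨0, hn⟩ : Fin n)]
    · have hieq : i = ⟨0, hn⟩ := Fin.ext hi
      rw [hieq]
      simp only [sigmaMat, negacirc, Matrix.of_apply, Fin.val_mk]
      rw [if_pos (by simp), dif_pos (Nat.zero_le _), dif_pos (by omega), one_mul]
      congr 1
      apply Fin.ext
      simp only [Fin.val_mk]
      omega
    · intro b _ hb
      have hb0 : (b : ℕ) ≠ 0 := fun hb0 => hb (Fin.ext hb0)
      have hbLt := b.isLt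
      simp only [sigmaMat, Matrix.of_apply]
      rw [if_neg (fun p => hb0 p.2), if_neg (by omega), zero_mul]
    · intro habs; exact absurd (Finset.mem_univ _) habs
  · have hiLt := i.isLt
    rw [Finset.sum_eq_single (⟨n - (i : ℕ), by omega⟩ : Fin n)]
    · simp only [sigmaMat, negacirc, Matrix.of_apply, Fin.val_mk]
      rw [if_neg (fun p => hi p.1), if_pos (by omega)]
      by_cases hle : n - (i : ℕ) ≤ (j : ℕ)
      · rw [dif_pos hle, dif_neg (by omega)]
        have heq : (-1 : ℤ) * h ⟨(j:ℕ) - (n - (i:ℕ)), by omega⟩ =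
            -h ⟨(j:ℕ) - (n - (i:ℕ)), by omega⟩ := by ring
        rw [heq]
        congr 2
        apply Fin.ext
        simp only [Fin.val_mk]
        omega
      · rw [dif_neg hle, dif_pos (by omega)]
        have heq : (-1 : ℤ) * -h ⟨n + (j:ℕ) - (n - (i:ℕ)), by omega⟩ =
            h ⟨n + (j:ℕ) - (n - (i:ℕ)), by omega⟩ := by ring
        rw [heq]
        congr 1
        apply Fin.ext
        simp only [Fin.val_mk]
        omega
    · intro b _ hb
      have hb0 : (b : ℕ) ≠ n - (i : ℕ) := fun hb0 => hb (Fin.ext hb0)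
      simp only [sigmaMat, Matrix.of_apply]
      rw [if_neg (fun p => hi p.1), if_neg (by omega), zero_mul]
    · intro habs; exact absurd (Finset.mem_univ _) habs

/-- The matrix `σ_n · ρ(h)` is symmetric. -/
theorem stmt16 (n : ℕ) (hn : 0 < n) (h : Fin n → ℤ) :
    (sigmaMat n * negacirc n h).IsSymm := by
  rw [Matrix.IsSymm]
  ext i j
  rw [Matrix.transpose_apply, sigma_mul_entry n hn h i j, sigma_mul_entry n hn h j i]
  by_cases hlt : (j : ℕ) + (i : ℕ) < n
  · rw [dif_pos hlt, dif_pos (by omega)]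
    congr 1; apply Fin.ext; simp only [Fin.val_mk]; omega
  · rw [dif_neg hlt, dif_neg (by omega)]
    congr 2; apply Fin.ext; simp only [Fin.val_mk]; omega
end

section
/- Let H be a symmetric n×n integer matrix, q a prime, λ a positive integer, and let L = (1/√(λq))·L^⊥(H), where L^⊥(H) = {(z₁,z₂) ∈ ℤ^{2n} : H·z₁ ≡ z₂ mod q}. Given any target v ∈ ℝ^{2n} with dist(v, L) < 1/(2√(λq)), the following procedure outputs the (unique) closest lattice vector: set cᵢ = ⌊√(λq)·vᵢ⌉ for i = 1,…,n; set w = (v_{n+1},…,v_{2n})·√(λq) − (c₁,…,c_n)·H; set c_{n+i} = ⌊wᵢ/q⌉ for i = 1,…,n; output the lattice vector (c₁,…,c_{2n})·(1/√(λq))·M_H, where M_H = [[I_n, H],[0, q·I_n]]. -/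
lemma round_eq_of_abs_sub_lt_half (x : ℝ) (m : ℤ) (h : |x - (m : ℝ)| < 1/2) :
    round x = m := by
  rw [abs_sub_lt_iff] at h
  rw [round_eq, Int.floor_eq_iff]
  constructor <;> linarith [h.1, h.2]

/-- Correctness of the trivial bounded-distance decoder for `L = (1/√(λq)) L^⊥(H)`:
if some lattice point lies within distance `1/(2√(λq))` of the target `v`, then the
rounding procedure outputs exactly that (necessarily unique) closest lattice point. -/
theorem stmt18 (n lam q : ℕ) (hn : 0 < n) (hlam : 0 < lam) (hq : q.Prime)
    (H : Matrix (Fin n) (Fin n) ℤ) (hH : H.IsSymm) (v : Fin n ⊕ Fin n → ℝ) :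
    let s : ℝ := Real.sqrt (lam * q)
    let M : Matrix (Fin n ⊕ Fin n) (Fin n ⊕ Fin n) ℤ :=
      Matrix.fromBlocks 1 H 0 ((q : ℤ) • 1)
    let c₁ : Fin n → ℤ := fun i => round (s * v (Sum.inl i))
    let w : Fin n → ℝ := fun i => s * v (Sum.inr i) - ((Matrix.vecMul c₁ H) i : ℝ)
    let c₂ : Fin n → ℤ := fun i => round (w i / q)
    let out : Fin n ⊕ Fin n → ℝ :=
      fun i => ((Matrix.vecMul (Sum.elim c₁ c₂) M) i : ℝ) / s
    ∀ c₀ : Fin n ⊕ Fin n → ℤ,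
      Real.sqrt (∑ i, (v i - ((Matrix.vecMul c₀ M) i : ℝ) / s) ^ 2) < 1 / (2 * s) →
      (fun i => ((Matrix.vecMul c₀ M) i : ℝ) / s) = out := by
  intro s M c₁ w c₂ out c₀ hdist
  have hq0 : (0 : ℝ) < q := by exact_mod_cast hq.pos
  have hq1 : (1 : ℝ) ≤ q := by exact_mod_cast hq.one_lt.le
  have hs : 0 < s := by
    apply Real.sqrt_pos.mpr
    positivity
  -- per-coordinate bound
  have hsum : ∑ i, (v i - ((Matrix.vecMul c₀ M) i : ℝ) / s) ^ 2 < (1 / (2 * s)) ^ 2 := by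
    have := (Real.sqrt_lt' (by positivity : (0:ℝ) < 1 / (2*s))).mp hdist
    exact this
  have hcoord : ∀ i, |v i - ((Matrix.vecMul c₀ M) i : ℝ) / s| < 1 / (2 * s) := by
    intro i
    have h1 : (v i - ((Matrix.vecMul c₀ M) i : ℝ) / s) ^ 2 < (1 / (2 * s)) ^ 2 :=
      lt_of_le_of_lt (Finset.single_le_sum (f := fun i => (v i - ((Matrix.vecMul c₀ M) i : ℝ) / s) ^ 2)
        (fun j _ => sq_nonneg _) (Finset.mem_univ i)) hsum
    exact abs_lt_of_sq_lt_sq h1 (by positivity)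
  -- compute vecMul c₀ M
  have hM : Matrix.vecMul c₀ M =
      Sum.elim (c₀ ∘ Sum.inl)
        (Matrix.vecMul (c₀ ∘ Sum.inl) H + fun i => (q : ℤ) * c₀ (Sum.inr i)) := by
    show Matrix.vecMul c₀ (Matrix.fromBlocks 1 H 0 ((q : ℤ) • 1)) = _
    rw [Matrix.vecMul_fromBlocks]
    ext i
    cases i with
    | inl i => simp [Matrix.vecMul_one]
    | inr i =>
        simp [Matrix.vecMul_smul, Matrix.vecMul_one, mul_comm]
  set a : Fin n → ℤ := c₀ ∘ Sum.inl with ha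
  set b : Fin n → ℤ := c₀ ∘ Sum.inr with hb
  -- c₁ = a
  have hc₁ : c₁ = a := by
    funext i
    apply round_eq_of_abs_sub_lt_half
    have h := hcoord (Sum.inl i)
    rw [hM] at h
    simp only [Sum.elim_inl] at h
    have e : s * (v (Sum.inl i) - (a i : ℝ) / s) = s * v (Sum.inl i) - (a i : ℝ) := by
      field_simp
    have : |s * v (Sum.inl i) - (a i : ℝ)| = s * |v (Sum.inl i) - (a i : ℝ) / s| := by
      rw [← e, abs_mul, abs_of_pos hs]
    rw [this]
    calc s * |v (Sum.inl i) - (a i : ℝ) / s| < s * (1 / (2 * s)) := by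
          exact mul_lt_mul_of_pos_left h hs
      _ = 1 / 2 := by field_simp
  -- c₂ = b
  have hc₂ : c₂ = b := by
    funext i
    apply round_eq_of_abs_sub_lt_half
    have h := hcoord (Sum.inr i)
    rw [hM] at h
    simp only [Sum.elim_inr] at h
    have hw : w i = s * v (Sum.inr i) - ((Matrix.vecMul a H) i : ℝ) := by
      simp only [w, hc₁]
    have key : |w i - (q : ℝ) * b i| < 1 / 2 := by
      have e : s * (v (Sum.inr i) -
          (((Matrix.vecMul a H + fun j => (q : ℤ) * b j) i : ℤ) : ℝ) / s)
          = w i - (q : ℝ) * b i := by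
        rw [hw, Pi.add_apply]; push_cast; field_simp; ring
      have heq : |w i - (q : ℝ) * b i| = s * |v (Sum.inr i) -
          (((Matrix.vecMul a H + fun j => (q : ℤ) * b j) i : ℤ) : ℝ) / s| := by
        rw [← e, abs_mul, abs_of_pos hs]
      rw [heq]
      calc s * _ < s * (1 / (2 * s)) := mul_lt_mul_of_pos_left h hs
        _ = 1 / 2 := by field_simp
    have e2 : w i / q - (b i : ℝ) = (w i - (q : ℝ) * b i) / q := by
      field_simp
    rw [e2, abs_div, abs_of_pos hq0]
    calc |w i - (q : ℝ) * b i| / q < (1/2) / q := by gcongr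
      _ ≤ 1 / 2 := by
          rw [div_le_div_iff₀ hq0 (by norm_num)]; nlinarith
  have hce : Sum.elim c₁ c₂ = c₀ := by
    funext i
    cases i with
    | inl i => simp [hc₁, ha]
    | inr i => simp [hc₂, hb]
  funext i
  simp only [out, hce]
end
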